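/- Let e ≥ 1 and let (V, x) be a Λ-module of dimension k (so k ≤ 2^(e+1)), with associated representation ρ : D → GL(V). Then ρ is injective (i.e. the representation is faithful) if and only if 2^e < k. -/

import Mathlib

section Aux

lemma char2_one_add_pow {A : Type*} [Ring A] (h2 : ∀ a : A, a + a = 0)
    (N : A) (m : ℕ) : (1 + N) ^ (2 ^ m) = 1 + N ^ (2 ^ m) := by
  induction m with
  | zero => simp
  | succ m ih =>
    have h : 2 ^ (m + 1) = 2 ^ m * 2 := by ring
    rw [h, pow_mul, ih, pow_mul]
    have expand : (1 + N ^ 2 ^ m) ^ 2 =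
        1 + (N ^ 2 ^ m + N ^ 2 ^ m) + (N ^ 2 ^ m) ^ 2 := by noncomm_ring
    rw [expand, h2, add_zero]

end Aux

/-- Let `e ≥ 1` and let `(V, x)` be a `Λ`-module of dimension `k` over
`R = F₂[D]`, where `D` is the dihedral group of order `2^(e+2)` with `g₂ = sr 1`, and
with associated representation `ρ : D → GL(V)`.  Then `ρ` is faithful (injective) if and
only if `2^e < k`. -/
theorem lambda_module_faithful_iff (e k : ℕ) (he : 1 ≤ e)
    (V : Type) [AddCommGroup V] [Module (ZMod 2) V]
    (ρ : Representation (ZMod 2) (DihedralGroup (2 ^ (e + 1))) V)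
    (x : V)
    (hx : ρ (DihedralGroup.sr 1) x = x)
    (hcyc : Submodule.span (ZMod 2)
      (Set.range fun g : DihedralGroup (2 ^ (e + 1)) => ρ g x) = ⊤)
    (hdim : Module.finrank (ZMod 2) V = k) :
    Function.Injective ρ ↔ 2 ^ e < k := by
  haveI : NeZero (2 ^ (e + 1)) := ⟨pow_ne_zero _ two_ne_zero⟩
  classical
  haveI hfin : Module.Finite (ZMod 2) V := by
    rw [Module.finite_def, Submodule.fg_def]
    exact ⟨Set.range fun g : DihedralGroup (2 ^ (e + 1)) => ρ g x,
      Set.finite_range _, hcyc⟩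
  -- char 2 facts
  have h2V : ∀ v : V, v + v = 0 := by
    intro v
    have := two_smul (ZMod 2) v
    rw [show (2 : ZMod 2) = 0 by decide, zero_smul] at this
    exact this.symm
  have h2 : ∀ f : Module.End (ZMod 2) V, f + f = 0 := by
    intro f; ext v; simp [h2V (f v)]
  set u : Module.End (ZMod 2) V := ρ (DihedralGroup.r 1) with hu
  set N : Module.End (ZMod 2) V := u - 1 with hNdef
  have huN : u = 1 + N := by rw [hNdef]; abel
  have hpow : ∀ m : ℕ, u ^ (2 ^ m) = 1 + N ^ (2 ^ m) := by
    intro m; rw [huN]; exact char2_one_add_pow h2 N m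
  have hr_pow : ∀ m : ℕ, ρ (DihedralGroup.r (m : ZMod (2 ^ (e + 1)))) = u ^ m := by
    intro m
    rw [hu, ← map_pow, DihedralGroup.r_one_pow]
  have hun : u ^ (2 ^ (e + 1)) = 1 := by
    rw [← hr_pow, ZMod.natCast_self, show DihedralGroup.r (0 : ZMod (2 ^ (e+1))) = 1 from rfl,
      map_one]
  have hNn : N ^ (2 ^ (e + 1)) = 0 := by
    have := (hpow (e + 1)).symm.trans hun
    rwa [add_eq_left] at this
  -- key: if N^(2^e) = 0 then finrank ≤ 2^e
  have key : N ^ (2 ^ e) = 0 → k ≤ 2 ^ e := by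
    intro hN
    set W : Submodule (ZMod 2) V :=
      Submodule.span (ZMod 2) (Set.range fun j : Fin (2 ^ e) => (N ^ (j : ℕ)) x) with hW
    have hxW : x ∈ W := by
      refine Submodule.subset_span ⟨⟨0, Nat.two_pow_pos e⟩, ?_⟩
      simp
    have hstab : ∀ v ∈ W, u v ∈ W := by
      intro v hv
      induction hv using Submodule.span_induction with
      | mem v hv =>
        obtain ⟨j, rfl⟩ := hv
        have : u ((N ^ (j : ℕ)) x) = (N ^ (j : ℕ)) x + (N ^ ((j : ℕ) + 1)) x := by
          rw [huN]
          simp [pow_succ', Module.End.mul_apply]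
        rw [this]
        refine add_mem (Submodule.subset_span ⟨j, rfl⟩) ?_
        rcases lt_or_eq_of_le (Nat.succ_le_of_lt j.2) with hlt | heq
        · exact Submodule.subset_span ⟨⟨(j : ℕ) + 1, hlt⟩, rfl⟩
        · rw [show (j : ℕ) + 1 = 2 ^ e from heq, hN]; simp
      | zero => simp
      | add a b _ _ ha hb => rw [map_add]; exact add_mem ha hb
      | smul c a _ ha => rw [map_smul]; exact Submodule.smul_mem _ _ ha
    have hrW : ∀ m : ℕ, ρ (DihedralGroup.r (m : ZMod (2 ^ (e + 1)))) x ∈ W := by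
      intro m
      rw [hr_pow]
      induction m with
      | zero => simpa using hxW
      | succ m ih =>
        rw [pow_succ']
        exact hstab _ ih
    have hall : ∀ g : DihedralGroup (2 ^ (e + 1)), ρ g x ∈ W := by
      intro g
      cases g with
      | r i =>
        have := hrW i.val
        rwa [ZMod.natCast_zmod_val] at this
      | sr i =>
        have hfac : DihedralGroup.sr i =
            DihedralGroup.r (1 - i) * DihedralGroup.sr 1 := by
          rw [DihedralGroup.r_mul_sr]; ring_nf
        rw [hfac, map_mul, Module.End.mul_apply, hx]
        have := hrW (1 - i).val
        rwa [ZMod.natCast_zmod_val] at this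
    have hWtop : Submodule.span (ZMod 2)
        (Set.range fun j : Fin (2 ^ e) => (N ^ (j : ℕ)) x) = ⊤ := by
      rw [← hW]
      refine le_antisymm le_top ?_
      rw [← hcyc, Submodule.span_le]
      rintro _ ⟨g, rfl⟩
      exact hall g
    have := finrank_le_of_span_eq_top hWtop
    rw [hdim, Fintype.card_fin] at this
    exact this
  constructor
  · -- faithful → 2^e < k
    intro hinj
    by_contra hk
    push_neg at hk
    -- N ^ k = 0 by Cayley-Hamilton for nilpotent endomorphisms
    have hnil : IsNilpotent N := ⟨2 ^ (e + 1), hNn⟩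
    have hchar := hnil.charpoly_eq_X_pow_finrank
    have hNk : N ^ k = 0 := by
      have := N.aeval_self_charpoly
      rw [hchar, map_pow, Polynomial.aeval_X, hdim] at this
      exact this
    have hN2e : N ^ (2 ^ e) = 0 := by
      rw [show 2 ^ e = k + (2 ^ e - k) by omega, pow_add, hNk, zero_mul]
    have hu2e : u ^ (2 ^ e) = 1 := by rw [hpow, hN2e, add_zero]
    have : ρ (DihedralGroup.r ((2 ^ e : ℕ) : ZMod (2 ^ (e + 1)))) = ρ 1 := by
      rw [hr_pow, hu2e, map_one]
    have heq := hinj this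
    rw [DihedralGroup.one_def] at heq
    injection heq with h0
    rw [ZMod.natCast_eq_zero_iff] at h0
    have := Nat.le_of_dvd (Nat.pow_pos (n := e) two_pos) h0
    have : (2 : ℕ) ^ e < 2 ^ (e + 1) := Nat.pow_lt_pow_succ one_lt_two
    omega
  · -- 2^e < k → faithful
    intro hk
    have hker : ∀ g : DihedralGroup (2 ^ (e + 1)), ρ g = 1 → g = 1 := by
      intro g hg
      by_contra hg1
      -- derive u ^ (2^e) = 1
      have hu2e : u ^ (2 ^ e) = 1 := by
        cases g with
        | r i =>
          have hi : i ≠ 0 := by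
            intro h; apply hg1; rw [h, DihedralGroup.one_def]
          have hui : u ^ i.val = 1 := by
            rw [← hr_pow, ZMod.natCast_zmod_val, hg]
          have hd1 : orderOf u ∣ i.val := orderOf_dvd_of_pow_eq_one hui
          have hd2 : orderOf u ∣ 2 ^ (e + 1) := orderOf_dvd_of_pow_eq_one hun
          have hdg : orderOf u ∣ Nat.gcd i.val (2 ^ (e + 1)) := Nat.dvd_gcd hd1 hd2
          have hgd : Nat.gcd i.val (2 ^ (e + 1)) ∣ 2 ^ (e + 1) := Nat.gcd_dvd_right _ _
          obtain ⟨a, ha, hae⟩ := (Nat.dvd_prime_pow Nat.prime_two).mp hgd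
          have hivpos : 0 < i.val := by
            rcases Nat.eq_zero_or_pos i.val with h | h
            · exact absurd ((ZMod.val_eq_zero i).mp h) hi
            · exact h
          have hgle : Nat.gcd i.val (2 ^ (e + 1)) ≤ i.val := Nat.gcd_le_left _ hivpos
          have hivlt : i.val < 2 ^ (e + 1) := ZMod.val_lt i
          have hale : a ≤ e := by
            by_contra hae'
            have : a = e + 1 := by omega
            rw [this] at hae
            omega
          have : orderOf u ∣ 2 ^ e := hdg.trans (hae ▸ pow_dvd_pow 2 hale)
          exact orderOf_dvd_iff_pow_eq_one.mp this
        | sr i =>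
          have h1 : ρ (DihedralGroup.sr (i + 1)) = u := by
            rw [show DihedralGroup.sr (i + 1) = DihedralGroup.sr i * DihedralGroup.r 1 from
              (DihedralGroup.sr_mul_r i 1).symm, map_mul, hg, one_mul]
          have h2' : u * u = 1 := by
            rw [← h1, ← map_mul, DihedralGroup.sr_mul_self, map_one]
          obtain ⟨c, hc⟩ : 2 ∣ 2 ^ e := dvd_pow_self 2 (by omega)
          rw [hc, pow_mul, show u ^ 2 = 1 by rw [sq]; exact h2', one_pow]
      have hN2e : N ^ (2 ^ e) = 0 := by
        have := (hpow e).symm.trans hu2e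
        rwa [add_eq_left] at this
      have := key hN2e
      omega
    intro a b hab
    have h1 : ρ (a * b⁻¹) = 1 := by
      rw [map_mul, hab, ← map_mul, mul_inv_cancel, map_one]
    have := hker _ h1
    rwa [mul_inv_eq_one] at this
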